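/- Let A be a bialgebra and F an invertible element of A ⊗ A satisfying the factorized twist equations (Δ ⊗ id)(F) = F₁₃ F₂₃ and (id ⊗ Δ_F)(F) = F₁₂ F₁₃, where Δ_F(a) = F Δ(a) F⁻¹. Then F satisfies the general twist equation F₁₂ · (Δ ⊗ id)(F) = F₂₃ · (id ⊗ Δ)(F). -/

import Mathlib

open TensorProduct

/-- A factorizable twist, i.e. an invertible `F ∈ A ⊗ A` satisfying
`(Δ ⊗ id)(F) = F₁₃ F₂₃` and `(id ⊗ Δ_F)(F) = F₁₂ F₁₃` (where
`(id ⊗ Δ_F)(F) = F₂₃ (id ⊗ Δ)(F) F₂₃⁻¹`), satisfies the Drinfeld twist equation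
`F₁₂ (Δ ⊗ id)(F) = F₂₃ (id ⊗ Δ)(F)`. -/
theorem factorized_twist_implies_twist {R A : Type*} [CommRing R] [Ring A] [Bialgebra R A]
    (F Finv : A ⊗[R] A) (hinv1 : F * Finv = 1) (hinv2 : Finv * F = 1) :
    let D1 : A ⊗[R] A →ₐ[R] A ⊗[R] (A ⊗[R] A) :=
      (Algebra.TensorProduct.assoc R R R A A A).toAlgHom.comp
        (Algebra.TensorProduct.map (Bialgebra.comulAlgHom R A) (AlgHom.id R A))
    let D2 : A ⊗[R] A →ₐ[R] A ⊗[R] (A ⊗[R] A) :=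
      Algebra.TensorProduct.map (AlgHom.id R A) (Bialgebra.comulAlgHom R A)
    let F12 := (Algebra.TensorProduct.map (AlgHom.id R A)
      (Algebra.TensorProduct.includeLeft : A →ₐ[R] A ⊗[R] A)) F
    let F13 := (Algebra.TensorProduct.map (AlgHom.id R A)
      (Algebra.TensorProduct.includeRight : A →ₐ[R] A ⊗[R] A)) F
    let F23 := (Algebra.TensorProduct.includeRight :
      (A ⊗[R] A) →ₐ[R] A ⊗[R] (A ⊗[R] A)) F
    let F23inv := (Algebra.TensorProduct.includeRight :
      (A ⊗[R] A) →ₐ[R] A ⊗[R] (A ⊗[R] A)) Finv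
    D1 F = F13 * F23 →
    F23 * D2 F * F23inv = F12 * F13 →
    F12 * D1 F = F23 * D2 F := by
  intro D1 D2 F12 F13 F23 F23inv h1 h2
  have hi : F23inv * F23 = 1 := by
    simp only [F23inv, F23, ← map_mul, hinv2, map_one]
  calc F12 * D1 F = F12 * F13 * F23 := by rw [h1, mul_assoc]
    _ = F23 * D2 F * F23inv * F23 := by rw [h2]
    _ = F23 * D2 F := by rw [mul_assoc, hi, mul_one]
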